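/- Let c and d be positive integers and let n = cd + c − 1. Then the intervals [A, f_c(A)], as A ranges over all d-subsets of [n], are pairwise disjoint. -/

import Mathlib

open Fin.NatCast

/-- The clockwise arc of `l` consecutive points on the circular representation of `[n]`
(modelled as `Fin n`), starting at `s`. -/
def cArc (n : ℕ) [NeZero n] (s : Fin n) (l : ℕ) : Finset (Fin n) :=
  (Finset.range l).image (fun t : ℕ => s + (t : Fin n))

/-- The interval `[A,B] = {C : A ⊆ C ⊆ B}` in the Boolean lattice of subsets of `[n]`. -/
def fInterval {n : ℕ} (A B : Finset (Fin n)) : Finset (Finset (Fin n)) :=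
  B.powerset.filter (fun C => A ⊆ C)

/-- A block structure of `A ⊆ [n]` with respect to the density `δ`: a partition of the
circular representation of `[n]` into clockwise-consecutive blocks
`B₁, G₁, B₂, G₂, …, B_k, G_k` satisfying conditions (i)-(iv). Block `Bᵢ` is the arc of
length `blen i` starting at `bstart i`, and the gap `Gᵢ` is the arc of length `glen i`
immediately following `Bᵢ`. -/
structure BlockStructure (n : ℕ) [NeZero n] (δ : ℝ) (A : Finset (Fin n)) where
  k : ℕ
  kpos : 0 < k
  bstart : Fin k → Fin n
  blen : Fin k → ℕ
  glen : Fin k → ℕ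
  blen_pos : ∀ i, 0 < blen i
  /-- the blocks and gaps are clockwise-consecutive: `B_{i+1}` starts right after `Gᵢ` -/
  consec : ∀ i : Fin k,
    bstart ⟨(i.val + 1) % k, Nat.mod_lt _ kpos⟩ = bstart i + ((blen i + glen i : ℕ) : Fin n)
  /-- (i) the first element of each block lies in `A` -/
  start_mem : ∀ i, bstart i ∈ A
  /-- (ii) the gaps contain no element of `A` -/
  gap_inter : ∀ i, Disjoint (cArc n (bstart i + (blen i : Fin n)) (glen i)) A
  /-- the blocks and gaps cover `[n]` -/
  cover : ∀ x : Fin n,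
    (∃ i, x ∈ cArc n (bstart i) (blen i)) ∨
      (∃ i, x ∈ cArc n (bstart i + (blen i : Fin n)) (glen i))
  /-- distinct blocks are disjoint -/
  block_disj : ∀ i j, i ≠ j →
    Disjoint (cArc n (bstart i) (blen i)) (cArc n (bstart j) (blen j))
  /-- distinct gaps are disjoint -/
  gap_disj : ∀ i j, i ≠ j →
    Disjoint (cArc n (bstart i + (blen i : Fin n)) (glen i))
      (cArc n (bstart j + (blen j : Fin n)) (glen j))
  /-- blocks are disjoint from gaps -/
  block_gap_disj : ∀ i j,
    Disjoint (cArc n (bstart i) (blen i)) (cArc n (bstart j + (blen j : Fin n)) (glen j))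
  /-- (iii) lower density bound: `δ·|A ∩ Bᵢ| − 1 < |Bᵢ|` -/
  density_lb : ∀ i,
    δ * ((A ∩ cArc n (bstart i) (blen i)).card : ℝ) - 1 < ((cArc n (bstart i) (blen i)).card : ℝ)
  /-- (iii) upper density bound: `|Bᵢ| ≤ δ·|A ∩ Bᵢ|` -/
  density_ub : ∀ i,
    ((cArc n (bstart i) (blen i)).card : ℝ) ≤ δ * ((A ∩ cArc n (bstart i) (blen i)).card : ℝ)
  /-- (iv) every proper initial segment `[bᵢ,y] ⊊ Bᵢ` satisfies `|[bᵢ,y]| + 1 ≤ δ·|[bᵢ,y] ∩ A|` -/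
  initial_seg : ∀ i, ∀ t : ℕ, t + 1 < blen i →
    ((cArc n (bstart i) (t + 1)).card : ℝ) + 1 ≤ δ * (((cArc n (bstart i) (t + 1)) ∩ A).card : ℝ)

namespace BlockStructure

variable {n : ℕ} [NeZero n] {δ : ℝ} {A : Finset (Fin n)}

/-- The block `Bᵢ`. -/
def block (P : BlockStructure n δ A) (i : Fin P.k) : Finset (Fin n) :=
  cArc n (P.bstart i) (P.blen i)

/-- The gap `Gᵢ`. -/
def gap (P : BlockStructure n δ A) (i : Fin P.k) : Finset (Fin n) :=
  cArc n (P.bstart i + (P.blen i : Fin n)) (P.glen i)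

/-- `𝒢_δ(A) = G₁ ∪ ⋯ ∪ G_k`, the union of the gaps. -/
def gapsUnion (P : BlockStructure n δ A) : Finset (Fin n) :=
  Finset.univ.biUnion P.gap

/-- `f_δ(A) = A ∪ 𝒢_δ(A)`. -/
def fset (P : BlockStructure n δ A) : Finset (Fin n) :=
  A ∪ P.gapsUnion

end BlockStructure

section ArcLemmas
variable {n : ℕ} [NeZero n]

lemma mem_cArc {s x : Fin n} {l : ℕ} :
    x ∈ cArc n s l ↔ ∃ t, t < l ∧ x = s + (t : Fin n) := by
  simp only [cArc, Finset.mem_image, Finset.mem_range]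
  constructor
  · rintro ⟨t, ht, rfl⟩; exact ⟨t, ht, rfl⟩
  · rintro ⟨t, ht, rfl⟩; exact ⟨t, ht, rfl⟩

lemma fin_cancel {s s' : Fin n} (t : ℕ) (h : s + (t : Fin n) = s' + (t : Fin n)) : s = s' :=
  add_right_cancel h

lemma fin_off {s : Fin n} {a b c : ℕ} (h : a + b = c) :
    (s + (a : Fin n)) + (b : Fin n) = s + (c : Fin n) := by
  subst h; push_cast; abel

lemma fin_zero_off (s : Fin n) : s + ((0 : ℕ) : Fin n) = s := by push_cast; abel

lemma cArc_card_le (s : Fin n) (l : ℕ) : (cArc n s l).card ≤ l :=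
  le_trans Finset.card_image_le (by simp)

lemma cArc_card (s : Fin n) {l : ℕ} (hl : l ≤ n) : (cArc n s l).card = l := by
  rw [cArc, Finset.card_image_of_injOn, Finset.card_range]
  intro t₁ h₁ t₂ h₂ h
  simp only [Finset.coe_range, Set.mem_Iio] at h₁ h₂
  have h' : (t₁ : Fin n) = t₂ := add_left_cancel h
  have h'' : t₁ % n = t₂ % n := by
    have := congrArg Fin.val h'
    simpa [Fin.val_natCast] using this
  rwa [Nat.mod_eq_of_lt (lt_of_lt_of_le h₁ hl), Nat.mod_eq_of_lt (lt_of_lt_of_le h₂ hl)] at h''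

lemma cArc_eq_univ (s : Fin n) {l : ℕ} (hl : n ≤ l) : cArc n s l = Finset.univ := by
  apply Finset.eq_univ_iff_forall.mpr
  intro x
  exact mem_cArc.mpr ⟨(x - s).val, lt_of_lt_of_le (x - s).isLt hl,
    by rw [Fin.cast_val_eq_self]; abel⟩

lemma cArc_append (s : Fin n) (l₁ l₂ : ℕ) :
    cArc n s (l₁ + l₂) = cArc n s l₁ ∪ cArc n (s + (l₁ : Fin n)) l₂ := by
  ext x
  simp only [Finset.mem_union, mem_cArc]
  constructor
  · rintro ⟨t, ht, rfl⟩
    by_cases h : t < l₁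
    · exact Or.inl ⟨t, h, rfl⟩
    · refine Or.inr ⟨t - l₁, by omega, ?_⟩
      exact (fin_off (show l₁ + (t - l₁) = t by omega)).symm
  · rintro (⟨t, ht, rfl⟩ | ⟨t, ht, rfl⟩)
    · exact ⟨t, by omega, rfl⟩
    · exact ⟨l₁ + t, by omega, fin_off rfl⟩

lemma cArc_subset (s : Fin n) {a b L : ℕ} (h : a + b ≤ L) :
    cArc n (s + (a : Fin n)) b ⊆ cArc n s L := by
  intro x hx
  obtain ⟨t, ht, rfl⟩ := mem_cArc.mp hx
  exact mem_cArc.mpr ⟨a + t, by omega, fin_off rfl⟩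

lemma cArc_mono (s : Fin n) {l₁ l₂ : ℕ} (h : l₁ ≤ l₂) : cArc n s l₁ ⊆ cArc n s l₂ := by
  intro x hx
  obtain ⟨t, ht, rfl⟩ := mem_cArc.mp hx
  exact mem_cArc.mpr ⟨t, by omega, rfl⟩

lemma cArc_split_card (s : Fin n) {l₁ l₂ : ℕ} (h : l₁ + l₂ ≤ n) (X : Finset (Fin n)) :
    (cArc n s (l₁ + l₂) ∩ X).card
      = (cArc n s l₁ ∩ X).card + (cArc n (s + (l₁ : Fin n)) l₂ ∩ X).card := by
  have h1 : (cArc n s l₁).card = l₁ := cArc_card _ (by omega)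
  have h2 : (cArc n (s + (l₁ : Fin n)) l₂).card = l₂ := cArc_card _ (by omega)
  have h3 : (cArc n s (l₁ + l₂)).card = l₁ + l₂ := cArc_card s h
  have h4 := Finset.card_union_add_card_inter (cArc n s l₁) (cArc n (s + (l₁ : Fin n)) l₂)
  rw [← cArc_append] at h4
  have hint : ((cArc n s l₁) ∩ (cArc n (s + (l₁ : Fin n)) l₂)).card = 0 := by omega
  have hd : Disjoint (cArc n s l₁) (cArc n (s + (l₁ : Fin n)) l₂) := by
    rw [Finset.disjoint_iff_inter_eq_empty]
    exact Finset.card_eq_zero.mp hint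
  rw [cArc_append, Finset.union_inter_distrib_right]
  exact Finset.card_union_of_disjoint (hd.mono Finset.inter_subset_left Finset.inter_subset_left)

lemma cArc_one (s : Fin n) : cArc n s 1 = {s} := by
  ext x
  simp only [mem_cArc, Finset.mem_singleton]
  constructor
  · rintro ⟨t, ht, rfl⟩
    have : t = 0 := by omega
    subst this; exact fin_zero_off s
  · rintro rfl; exact ⟨0, by omega, (fin_zero_off _).symm⟩

lemma mem_cArc_self (s : Fin n) {l : ℕ} (hl : 0 < l) : s ∈ cArc n s l :=
  mem_cArc.mpr ⟨0, hl, (fin_zero_off _).symm⟩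

end ArcLemmas

section StructFacts
variable {n c : ℕ} [NeZero n] {S : Finset (Fin n)} (P : BlockStructure n (c : ℝ) S)

lemma mem_gapsUnion {x : Fin n} :
    x ∈ P.gapsUnion ↔ ∃ i, x ∈ cArc n (P.bstart i + (P.blen i : Fin n)) (P.glen i) := by
  simp [BlockStructure.gapsUnion, BlockStructure.gap, Finset.mem_biUnion]

lemma gap_subset_gapsUnion (i : Fin P.k) :
    cArc n (P.bstart i + (P.blen i : Fin n)) (P.glen i) ⊆ P.gapsUnion := by
  intro x hx; exact (mem_gapsUnion P).mpr ⟨i, hx⟩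

lemma block_disjoint_gapsUnion (i : Fin P.k) :
    Disjoint (cArc n (P.bstart i) (P.blen i)) P.gapsUnion := by
  rw [BlockStructure.gapsUnion, Finset.disjoint_biUnion_right]
  intro j _
  exact P.block_gap_disj i j

lemma block_card_eq (i : Fin P.k) :
    (cArc n (P.bstart i) (P.blen i)).card
      = c * (cArc n (P.bstart i) (P.blen i) ∩ S).card := by
  have h1 := P.density_lb i
  have h2 := P.density_ub i
  rw [Finset.inter_comm]
  have hA : c * (S ∩ cArc n (P.bstart i) (P.blen i)).card
      < (cArc n (P.bstart i) (P.blen i)).card + 1 := by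
    have : ((c : ℝ)) * ((S ∩ cArc n (P.bstart i) (P.blen i)).card : ℝ)
        < ((cArc n (P.bstart i) (P.blen i)).card : ℝ) + 1 := by linarith
    exact_mod_cast this
  have hB : (cArc n (P.bstart i) (P.blen i)).card
      ≤ c * (S ∩ cArc n (P.bstart i) (P.blen i)).card := by exact_mod_cast h2
  omega

lemma S_eq_biUnion : S = Finset.univ.biUnion
    (fun i => cArc n (P.bstart i) (P.blen i) ∩ S) := by
  ext x
  simp only [Finset.mem_biUnion, Finset.mem_univ, true_and, Finset.mem_inter]
  constructor
  · intro hx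
    rcases P.cover x with ⟨i, hi⟩ | ⟨i, hi⟩
    · exact ⟨i, hi, hx⟩
    · exact absurd hx (Finset.disjoint_left.mp (P.gap_inter i) hi)
  · rintro ⟨i, _, hx⟩; exact hx

lemma sum_block_inter : ∑ i, (cArc n (P.bstart i) (P.blen i) ∩ S).card = S.card := by
  conv_rhs => rw [S_eq_biUnion P]
  rw [Finset.card_biUnion]
  intro i _ j _ hij
  exact (P.block_disj i j hij).mono Finset.inter_subset_left Finset.inter_subset_left

lemma sum_block_card : ∑ i, (cArc n (P.bstart i) (P.blen i)).card = c * S.card := by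
  calc ∑ i, (cArc n (P.bstart i) (P.blen i)).card
      = ∑ i, c * (cArc n (P.bstart i) (P.blen i) ∩ S).card := by
        exact Finset.sum_congr rfl (fun i _ => block_card_eq P i)
    _ = c * ∑ i, (cArc n (P.bstart i) (P.blen i) ∩ S).card := by rw [Finset.mul_sum]
    _ = c * S.card := by rw [sum_block_inter P]

lemma total_card : ∑ i, (cArc n (P.bstart i) (P.blen i)).card
    + ∑ i, (cArc n (P.bstart i + (P.blen i : Fin n)) (P.glen i)).card = n := by
  have hu : (Finset.univ : Finset (Fin n)) =
      (Finset.univ.biUnion (fun i => cArc n (P.bstart i) (P.blen i))) ∪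
      (Finset.univ.biUnion (fun i => cArc n (P.bstart i + (P.blen i : Fin n)) (P.glen i))) := by
    ext x
    simp only [Finset.mem_univ, true_iff, Finset.mem_union, Finset.mem_biUnion, Finset.mem_univ,
      true_and]
    rcases P.cover x with ⟨i, hi⟩ | ⟨i, hi⟩
    · exact Or.inl ⟨i, hi⟩
    · exact Or.inr ⟨i, hi⟩
  have hdisj : Disjoint (Finset.univ.biUnion (fun i => cArc n (P.bstart i) (P.blen i)))
      (Finset.univ.biUnion (fun i => cArc n (P.bstart i + (P.blen i : Fin n)) (P.glen i))) := by
    rw [Finset.disjoint_biUnion_left]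
    intro i _
    rw [Finset.disjoint_biUnion_right]
    intro j _
    exact P.block_gap_disj i j
  have h1 : (Finset.univ : Finset (Fin n)).card = n := by
    rw [Finset.card_univ, Fintype.card_fin]
  rw [hu, Finset.card_union_of_disjoint hdisj] at h1
  rw [Finset.card_biUnion (fun i _ j _ hij => P.block_disj i j hij),
      Finset.card_biUnion (fun i _ j _ hij => P.gap_disj i j hij)] at h1
  exact h1

lemma blen_le (hc : 2 ≤ c) (hd : 0 < S.card) (hn : n = c * S.card + c - 1) (i : Fin P.k) :
    P.blen i ≤ n := by
  by_contra h
  push_neg at h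
  have hcard : (cArc n (P.bstart i) (P.blen i)).card = n := by
    rw [cArc_eq_univ _ (le_of_lt h), Finset.card_univ, Fintype.card_fin]
  have hle : (cArc n (P.bstart i) (P.blen i)).card ≤ c * S.card := by
    rw [← sum_block_card P]
    exact Finset.single_le_sum (f := fun j => (cArc n (P.bstart j) (P.blen j)).card)
      (fun j _ => Nat.zero_le _) (Finset.mem_univ i)
  rw [hcard] at hle
  omega

lemma blen_eq (hc : 2 ≤ c) (hd : 0 < S.card) (hn : n = c * S.card + c - 1) (i : Fin P.k) :
    P.blen i = c * (cArc n (P.bstart i) (P.blen i) ∩ S).card := by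
  rw [← block_card_eq P i, cArc_card _ (blen_le P hc hd hn i)]

lemma sum_gap_card (hc : 2 ≤ c) (hd : 0 < S.card) (hn : n = c * S.card + c - 1) :
    ∑ i, (cArc n (P.bstart i + (P.blen i : Fin n)) (P.glen i)).card = c - 1 := by
  have h1 := total_card P
  have h2 := sum_block_card P
  omega

lemma glen_le (hc : 2 ≤ c) (hd : 0 < S.card) (hn : n = c * S.card + c - 1) (i : Fin P.k) :
    P.glen i ≤ n := by
  by_contra h
  push_neg at h
  have hcard : (cArc n (P.bstart i + (P.blen i : Fin n)) (P.glen i)).card = n := by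
    rw [cArc_eq_univ _ (le_of_lt h), Finset.card_univ, Fintype.card_fin]
  have hle : (cArc n (P.bstart i + (P.blen i : Fin n)) (P.glen i)).card ≤ c - 1 := by
    rw [← sum_gap_card P hc hd hn]
    exact Finset.single_le_sum
      (f := fun j => (cArc n (P.bstart j + (P.blen j : Fin n)) (P.glen j)).card)
      (fun j _ => Nat.zero_le _) (Finset.mem_univ i)
  rw [hcard] at hle
  have : c * 1 ≤ c * S.card := Nat.mul_le_mul_left c hd
  omega

lemma gapsUnion_card (hc : 2 ≤ c) (hd : 0 < S.card) (hn : n = c * S.card + c - 1) :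
    P.gapsUnion.card = c - 1 := by
  have h : P.gapsUnion = Finset.univ.biUnion
      (fun i => cArc n (P.bstart i + (P.blen i : Fin n)) (P.glen i)) := rfl
  rw [h, Finset.card_biUnion (fun i _ j _ hij => P.gap_disj i j hij)]
  exact sum_gap_card P hc hd hn

lemma exists_prev (i : Fin P.k) : ∃ j : Fin P.k,
    P.bstart i = P.bstart j + ((P.blen j + P.glen j : ℕ) : Fin n) := by
  refine ⟨⟨(i.val + P.k - 1) % P.k, Nat.mod_lt _ P.kpos⟩, ?_⟩
  have hcons := P.consec ⟨(i.val + P.k - 1) % P.k, Nat.mod_lt _ P.kpos⟩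
  have hj : (⟨((i.val + P.k - 1) % P.k + 1) % P.k, Nat.mod_lt _ P.kpos⟩ : Fin P.k) = i := by
    apply Fin.ext
    show ((i.val + P.k - 1) % P.k + 1) % P.k = i.val
    rw [Nat.mod_add_mod]
    have h1 : i.val + P.k - 1 + 1 = i.val + P.k := by
      have := P.kpos; omega
    rw [h1, Nat.add_mod_right, Nat.mod_eq_of_lt i.isLt]
  rw [hj] at hcons
  exact hcons

lemma locS {x : Fin n} (hx : x ∈ S) :
    ∃ j, ∃ t, t < P.blen j ∧ x = P.bstart j + (t : Fin n) := by
  rcases P.cover x with ⟨j, hj⟩ | ⟨j, hj⟩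
  · obtain ⟨t, ht, rfl⟩ := mem_cArc.mp hj
    exact ⟨j, t, ht, rfl⟩
  · exact absurd hx (Finset.disjoint_left.mp (P.gap_inter j) hj)

lemma locG {x : Fin n} (hx : x ∈ P.gapsUnion) :
    ∃ i, ∃ p, p < P.glen i ∧ x = (P.bstart i + (P.blen i : Fin n)) + (p : Fin n) := by
  obtain ⟨i, hi⟩ := (mem_gapsUnion P).mp hx
  obtain ⟨p, hp, rfl⟩ := mem_cArc.mp hi
  exact ⟨i, p, hp, rfl⟩

lemma prefix_lb (hc : 2 ≤ c) (hd : 0 < S.card) (hn : n = c * S.card + c - 1)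
    (i : Fin P.k) {u : ℕ} (hu : 0 < u) (hub : u ≤ P.blen i) :
    u ≤ c * (cArc n (P.bstart i) u ∩ S).card := by
  rcases eq_or_lt_of_le hub with rfl | h
  · exact le_of_eq (blen_eq P hc hd hn i)
  · obtain ⟨t, rfl⟩ : ∃ t, u = t + 1 := ⟨u - 1, by omega⟩
    have hseg := P.initial_seg i t h
    have hcard : (cArc n (P.bstart i) (t + 1)).card = t + 1 :=
      cArc_card _ (le_trans hub (blen_le P hc hd hn i))
    rw [hcard] at hseg
    have : (t + 1 : ℕ) + 1 ≤ c * (cArc n (P.bstart i) (t + 1) ∩ S).card := by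
      exact_mod_cast hseg
    omega

lemma suffix_ub (hc : 2 ≤ c) (hd : 0 < S.card) (hn : n = c * S.card + c - 1)
    (i : Fin P.k) {v : ℕ} (hv : v ≤ P.blen i) :
    c * (cArc n (P.bstart i + ((P.blen i - v : ℕ) : Fin n)) v ∩ S).card ≤ v := by
  have hble := blen_le P hc hd hn i
  have hsplit := cArc_split_card (P.bstart i) (l₁ := P.blen i - v) (l₂ := v)
    (by omega : P.blen i - v + v ≤ n) S
  have heq : P.blen i - v + v = P.blen i := by omega
  rw [heq] at hsplit
  have hbeq := blen_eq P hc hd hn i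
  have hsplit' : c * (cArc n (P.bstart i) (P.blen i) ∩ S).card
      = c * (cArc n (P.bstart i) (P.blen i - v) ∩ S).card
        + c * (cArc n (P.bstart i + ((P.blen i - v : ℕ) : Fin n)) v ∩ S).card := by
    rw [hsplit]; ring
  have hpre : P.blen i - v ≤ c * (cArc n (P.bstart i) (P.blen i - v) ∩ S).card := by
    rcases Nat.eq_zero_or_pos (P.blen i - v) with h0 | h0
    · rw [h0]; exact Nat.zero_le _
    · exact prefix_lb P hc hd hn i h0 (by omega)
  omega

lemma prefix_strong (hc : 2 ≤ c) (hd : 0 < S.card) (hn : n = c * S.card + c - 1)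
    (j : Fin P.k) {u : ℕ} (hu : 0 < u) (hub : u ≤ P.blen j)
    (hmem : P.bstart j + ((u - 1 : ℕ) : Fin n) ∈ S) :
    u + c ≤ c * (cArc n (P.bstart j) u ∩ S).card + 1 := by
  obtain ⟨t, rfl⟩ : ∃ t, u = t + 1 := ⟨u - 1, by omega⟩
  simp only [Nat.add_sub_cancel] at hmem
  rcases Nat.eq_zero_or_pos t with rfl | ht
  · have : cArc n (P.bstart j) 1 ∩ S = {P.bstart j} := by
      rw [cArc_one]
      exact Finset.singleton_inter_of_mem (P.start_mem j)
    rw [this, Finset.card_singleton]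
    omega
  · have hsplit := cArc_split_card (P.bstart j) (l₁ := t) (l₂ := 1)
      (le_trans hub (blen_le P hc hd hn j)) S
    have hone : (cArc n (P.bstart j + (t : Fin n)) 1 ∩ S).card = 1 := by
      rw [cArc_one, Finset.singleton_inter_of_mem hmem, Finset.card_singleton]
    have hpre : t ≤ c * (cArc n (P.bstart j) t ∩ S).card :=
      prefix_lb P hc hd hn j ht (by omega)
    have hsplit' : c * (cArc n (P.bstart j) (t + 1) ∩ S).card
        = c * (cArc n (P.bstart j) t ∩ S).card + c := by
      rw [hsplit, hone]; ring
    omega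

end StructFacts

section MainLemmas
variable {n c : ℕ} [NeZero n] {S : Finset (Fin n)} (P : BlockStructure n (c : ℝ) S)

lemma fin_shift {s X : Fin n} {a b o : ℕ} (h : s + (a : Fin n) = X + (b : Fin n))
    (hab : o + a = b) : s = X + (o : Fin n) := by
  apply fin_cancel a
  rw [fin_off hab]
  exact h

lemma card_inter_eq_zero {I X : Finset (Fin n)} (h : Disjoint I X) : (I ∩ X).card = 0 :=
  Finset.card_eq_zero.mpr (Finset.disjoint_iff_inter_eq_empty.mp h)

lemma main1 (hc : 2 ≤ c) (hd : 0 < S.card) (hn : n = c * S.card + c - 1) :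
    ∀ l, 0 < l → l ≤ n → ∀ s : Fin n,
      (s + ((l - 1 : ℕ) : Fin n) ∈ P.gapsUnion ∨ ∃ i, P.bstart i = s + ((l : ℕ) : Fin n)) →
      c * (cArc n s l ∩ S).card + (cArc n s l ∩ P.gapsUnion).card ≤ l := by
  intro l
  induction l using Nat.strong_induction_on with
  | _ l IH =>
  intro hl0 hln s hcond
  have hcases : (∃ i p, p < P.glen i ∧
        s + ((l - 1 : ℕ) : Fin n) = P.bstart i + ((P.blen i + p : ℕ) : Fin n)) ∨
      (∃ j, s + ((l - 1 : ℕ) : Fin n) = P.bstart j + ((P.blen j - 1 : ℕ) : Fin n)) := by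
    rcases hcond with h | ⟨i, hi⟩
    · obtain ⟨i, p, hp, he⟩ := locG P h
      rw [fin_off rfl] at he
      exact Or.inl ⟨i, p, hp, he⟩
    · obtain ⟨j, hj⟩ := exists_prev P i
      rw [hj] at hi
      rcases Nat.eq_zero_or_pos (P.glen j) with hg | hg
      · refine Or.inr ⟨j, fin_cancel 1 ?_⟩
        rw [fin_off (show l - 1 + 1 = l by omega),
            fin_off (show P.blen j - 1 + 1 = P.blen j from by have := P.blen_pos j; omega),
            ← hi]
        congr 2
        omega
      · refine Or.inl ⟨j, P.glen j - 1, by omega, fin_cancel 1 ?_⟩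
        rw [fin_off (show l - 1 + 1 = l by omega),
            fin_off (show P.blen j + (P.glen j - 1) + 1 = P.blen j + P.glen j by omega),
            ← hi]
  rcases hcases with ⟨i, p, hp, he⟩ | ⟨j, he⟩
  · -- arc ends inside gap i, at gap position p (0-indexed)
    have hgle := glen_le P hc hd hn i
    have hble := blen_le P hc hd hn i
    rcases le_or_gt l (p + 1) with hcase | hcase
    · -- arc contained in the gap
      have hs : s = P.bstart i + ((P.blen i + (p + 1 - l) : ℕ) : Fin n) :=
        fin_shift he (by omega)
      have hs' : s = (P.bstart i + (P.blen i : Fin n)) + ((p + 1 - l : ℕ) : Fin n) := by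
        rw [hs]; exact (fin_off rfl).symm
      have hsub : cArc n s l ⊆ cArc n (P.bstart i + (P.blen i : Fin n)) (P.glen i) := by
        rw [hs']; exact cArc_subset _ (by omega)
      have hS0 : (cArc n s l ∩ S).card = 0 :=
        card_inter_eq_zero ((P.gap_inter i).mono_left hsub)
      have hG : (cArc n s l ∩ P.gapsUnion).card ≤ l :=
        le_trans (Finset.card_le_card Finset.inter_subset_left) (cArc_card_le _ _)
      have hS0' : c * (cArc n s l ∩ S).card = 0 := by rw [hS0, Nat.mul_zero]
      omega
    · rcases le_or_gt l (P.blen i + p + 1) with hcase2 | hcase2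
      · -- arc = suffix of block ∪ gap prefix
        set v := l - (p + 1) with hv
        have hv1 : 0 < v := by omega
        have hv2 : v ≤ P.blen i := by omega
        have hs : s = P.bstart i + ((P.blen i - v : ℕ) : Fin n) :=
          fin_shift he (by omega)
        have hsplitS := cArc_split_card s (l₁ := v) (l₂ := p + 1) (by omega) S
        have hsplitG := cArc_split_card s (l₁ := v) (l₂ := p + 1) (by omega) P.gapsUnion
        rw [show v + (p + 1) = l by omega] at hsplitS hsplitG
        have hsv : s + (v : Fin n) = P.bstart i + (P.blen i : Fin n) := by
          rw [hs]; exact fin_off (by omega)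
        have h1 : c * (cArc n s v ∩ S).card ≤ v := by
          rw [hs]; exact suffix_ub P hc hd hn i hv2
        have h2 : (cArc n s v ∩ P.gapsUnion).card = 0 := by
          refine card_inter_eq_zero ((block_disjoint_gapsUnion P i).mono_left ?_)
          rw [hs]; exact cArc_subset _ (by omega)
        have h3 : (cArc n (s + (v : Fin n)) (p + 1) ∩ S).card = 0 := by
          refine card_inter_eq_zero ((P.gap_inter i).mono_left ?_)
          rw [hsv]; exact cArc_mono _ (by omega)
        have h4 : (cArc n (s + (v : Fin n)) (p + 1) ∩ P.gapsUnion).card ≤ p + 1 :=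
          le_trans (Finset.card_le_card Finset.inter_subset_left) (cArc_card_le _ _)
        have hmul : c * (cArc n s l ∩ S).card
            = c * (cArc n s v ∩ S).card + c * (cArc n (s + (v : Fin n)) (p + 1) ∩ S).card := by
          rw [hsplitS]; ring
        have h3' : c * (cArc n (s + (v : Fin n)) (p + 1) ∩ S).card = 0 := by
          rw [h3, Nat.mul_zero]
        omega
      · -- arc = earlier part ∪ (block i ∪ gap prefix)
        set L := P.blen i + p + 1 with hL
        have hbase : s + ((l - L : ℕ) : Fin n) = P.bstart i := by
          apply fin_cancel (L - 1)
          rw [fin_off (show (l - L) + (L - 1) = l - 1 by omega),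
              show L - 1 = P.blen i + p by omega]
          exact he
        have hsplitS := cArc_split_card s (l₁ := l - L) (l₂ := L) (by omega) S
        have hsplitG := cArc_split_card s (l₁ := l - L) (l₂ := L) (by omega) P.gapsUnion
        rw [show (l - L) + L = l by omega] at hsplitS hsplitG
        rw [hbase] at hsplitS hsplitG
        -- split K = block ∪ gap-prefix
        have hKS := cArc_split_card (P.bstart i) (l₁ := P.blen i) (l₂ := p + 1) (by omega) S
        have hKG := cArc_split_card (P.bstart i) (l₁ := P.blen i) (l₂ := p + 1) (by omega)
          P.gapsUnion
        rw [show P.blen i + (p + 1) = L by omega] at hKS hKG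
        have hb1 : c * (cArc n (P.bstart i) (P.blen i) ∩ S).card = P.blen i :=
          (blen_eq P hc hd hn i).symm
        have hb2 : (cArc n (P.bstart i) (P.blen i) ∩ P.gapsUnion).card = 0 :=
          card_inter_eq_zero (block_disjoint_gapsUnion P i)
        have hg1 : (cArc n (P.bstart i + (P.blen i : Fin n)) (p + 1) ∩ S).card = 0 := by
          refine card_inter_eq_zero ((P.gap_inter i).mono_left ?_)
          exact cArc_mono _ (by omega)
        have hg2 : (cArc n (P.bstart i + (P.blen i : Fin n)) (p + 1) ∩ P.gapsUnion).card
            ≤ p + 1 :=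
          le_trans (Finset.card_le_card Finset.inter_subset_left) (cArc_card_le _ _)
        have hJ := IH (l - L) (by omega) (by omega) (by omega) s
          (Or.inr ⟨i, hbase.symm⟩)
        have hmulK : c * (cArc n (P.bstart i) L ∩ S).card
            = c * (cArc n (P.bstart i) (P.blen i) ∩ S).card
              + c * (cArc n (P.bstart i + (P.blen i : Fin n)) (p + 1) ∩ S).card := by
          rw [hKS]; ring
        have hmulI : c * (cArc n s l ∩ S).card
            = c * (cArc n s (l - L) ∩ S).card + c * (cArc n (P.bstart i) L ∩ S).card := by
          rw [hsplitS]; ring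
        have hg1' : c * (cArc n (P.bstart i + (P.blen i : Fin n)) (p + 1) ∩ S).card = 0 := by
          rw [hg1, Nat.mul_zero]
        omega
  · -- arc ends at the last point of block j (whose gap is empty)
    have hble := blen_le P hc hd hn j
    have hbpos := P.blen_pos j
    rcases le_or_gt l (P.blen j) with hcase | hcase
    · have hs : s = P.bstart j + ((P.blen j - l : ℕ) : Fin n) :=
        fin_shift he (by omega)
      have h1 : c * (cArc n s l ∩ S).card ≤ l := by
        rw [hs]; exact suffix_ub P hc hd hn j hcase
      have h2 : (cArc n s l ∩ P.gapsUnion).card = 0 := by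
        refine card_inter_eq_zero ((block_disjoint_gapsUnion P j).mono_left ?_)
        rw [hs]; exact cArc_subset _ (by omega)
      omega
    · have hbase : s + ((l - P.blen j : ℕ) : Fin n) = P.bstart j := by
        apply fin_cancel (P.blen j - 1)
        rw [fin_off (show (l - P.blen j) + (P.blen j - 1) = l - 1 by omega), he]
      have hsplitS := cArc_split_card s (l₁ := l - P.blen j) (l₂ := P.blen j) (by omega) S
      have hsplitG := cArc_split_card s (l₁ := l - P.blen j) (l₂ := P.blen j) (by omega)
        P.gapsUnion
      rw [show (l - P.blen j) + P.blen j = l by omega] at hsplitS hsplitG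
      rw [hbase] at hsplitS hsplitG
      have hb1 : c * (cArc n (P.bstart j) (P.blen j) ∩ S).card = P.blen j :=
        (blen_eq P hc hd hn j).symm
      have hb2 : (cArc n (P.bstart j) (P.blen j) ∩ P.gapsUnion).card = 0 :=
        card_inter_eq_zero (block_disjoint_gapsUnion P j)
      have hJ := IH (l - P.blen j) (by omega) (by omega) (by omega) s
        (Or.inr ⟨j, hbase.symm⟩)
      have hmulI : c * (cArc n s l ∩ S).card
          = c * (cArc n s (l - P.blen j) ∩ S).card
            + c * (cArc n (P.bstart j) (P.blen j) ∩ S).card := by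
        rw [hsplitS]; ring
      omega

lemma main2a (hc : 2 ≤ c) (hd : 0 < S.card) (hn : n = c * S.card + c - 1) :
    ∀ l, 0 < l → l ≤ n → ∀ s : Fin n, s ∈ P.gapsUnion →
      (∃ i, P.bstart i = s + ((l : ℕ) : Fin n)) →
      l ≤ c * (cArc n s l ∩ S).card + (cArc n s l ∩ P.gapsUnion).card := by
  intro l
  induction l using Nat.strong_induction_on with
  | _ l IH =>
  intro hl0 hln s hsgap hex
  obtain ⟨i, hi⟩ := hex
  obtain ⟨j, hj⟩ := exists_prev P i
  rw [hj] at hi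
  have hble := blen_le P hc hd hn j
  have hgle := glen_le P hc hd hn j
  have hbpos := P.blen_pos j
  rcases le_or_gt l (P.glen j) with hcase | hcase
  · -- arc is a suffix of gap j
    have hs1 : s = P.bstart j + ((P.blen j + (P.glen j - l) : ℕ) : Fin n) :=
      fin_shift hi.symm (by omega)
    have hs2 : s = (P.bstart j + (P.blen j : Fin n)) + ((P.glen j - l : ℕ) : Fin n) := by
      rw [hs1]; exact (fin_off rfl).symm
    have hsub : cArc n s l ⊆ cArc n (P.bstart j + (P.blen j : Fin n)) (P.glen j) := by
      rw [hs2]; exact cArc_subset _ (by omega)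
    have hIG : cArc n s l ∩ P.gapsUnion = cArc n s l :=
      Finset.inter_eq_left.mpr (hsub.trans (gap_subset_gapsUnion P j))
    rw [hIG, cArc_card _ hln]
    omega
  · rcases le_or_gt l (P.blen j + P.glen j) with hcase2 | hcase2
    · -- impossible: s would lie in block j
      have hs1 : s = P.bstart j + ((P.blen j + P.glen j - l : ℕ) : Fin n) :=
        fin_shift hi.symm (by omega)
      have hmem : s ∈ cArc n (P.bstart j) (P.blen j) :=
        mem_cArc.mpr ⟨P.blen j + P.glen j - l, by omega, hs1⟩
      exact absurd hsgap (Finset.disjoint_left.mp (block_disjoint_gapsUnion P j) hmem)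
    · -- arc = earlier part ∪ full unit j
      set U := P.blen j + P.glen j with hU
      have hbase : s + ((l - U : ℕ) : Fin n) = P.bstart j := by
        apply fin_cancel U
        rw [fin_off (show (l - U) + U = l by omega), ← hi]
      have hsplitS := cArc_split_card s (l₁ := l - U) (l₂ := U) (by omega) S
      have hsplitG := cArc_split_card s (l₁ := l - U) (l₂ := U) (by omega) P.gapsUnion
      rw [show (l - U) + U = l by omega] at hsplitS hsplitG
      rw [hbase] at hsplitS hsplitG
      have hKS := cArc_split_card (P.bstart j) (l₁ := P.blen j) (l₂ := P.glen j) (by omega) S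
      have hKG := cArc_split_card (P.bstart j) (l₁ := P.blen j) (l₂ := P.glen j) (by omega)
        P.gapsUnion
      rw [show P.blen j + P.glen j = U from rfl] at hKS hKG
      have hb1 : c * (cArc n (P.bstart j) (P.blen j) ∩ S).card = P.blen j :=
        (blen_eq P hc hd hn j).symm
      have hg0 : (cArc n (P.bstart j + (P.blen j : Fin n)) (P.glen j) ∩ S).card = 0 :=
        card_inter_eq_zero (P.gap_inter j)
      have hg0' : c * (cArc n (P.bstart j + (P.blen j : Fin n)) (P.glen j) ∩ S).card = 0 := by
        rw [hg0, Nat.mul_zero]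
      have hgG : cArc n (P.bstart j + (P.blen j : Fin n)) (P.glen j) ∩ P.gapsUnion
          = cArc n (P.bstart j + (P.blen j : Fin n)) (P.glen j) :=
        Finset.inter_eq_left.mpr (gap_subset_gapsUnion P j)
      have hgG' : (cArc n (P.bstart j + (P.blen j : Fin n)) (P.glen j) ∩ P.gapsUnion).card
          = P.glen j := by rw [hgG]; exact cArc_card _ hgle
      have hJ := IH (l - U) (by omega) (by omega) (by omega) s hsgap ⟨j, hbase.symm⟩
      have hmulI : c * (cArc n s l ∩ S).card
          = c * (cArc n s (l - U) ∩ S).card + c * (cArc n (P.bstart j) U ∩ S).card := by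
        rw [hsplitS]; ring
      have hmulK : c * (cArc n (P.bstart j) U ∩ S).card
          = c * (cArc n (P.bstart j) (P.blen j) ∩ S).card
            + c * (cArc n (P.bstart j + (P.blen j : Fin n)) (P.glen j) ∩ S).card := by
        rw [hKS]; ring
      omega

lemma main2b (hc : 2 ≤ c) (hd : 0 < S.card) (hn : n = c * S.card + c - 1)
    {l : ℕ} (hl0 : 0 < l) (hln : l ≤ n) {s : Fin n}
    (hsgap : s ∈ P.gapsUnion) (hend : s + ((l - 1 : ℕ) : Fin n) ∈ S) :
    l + c ≤ c * (cArc n s l ∩ S).card + (cArc n s l ∩ P.gapsUnion).card + 1 := by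
  obtain ⟨j, t, ht, he⟩ := locS P hend
  set u := t + 1 with hu
  have hub : u ≤ P.blen j := by omega
  have hlu : u < l := by
    by_contra hcon
    push_neg at hcon
    have hs1 : s = P.bstart j + ((u - l : ℕ) : Fin n) := fin_shift he (by omega)
    have hmem : s ∈ cArc n (P.bstart j) (P.blen j) :=
      mem_cArc.mpr ⟨u - l, by omega, hs1⟩
    exact absurd hsgap (Finset.disjoint_left.mp (block_disjoint_gapsUnion P j) hmem)
  have hbase : s + ((l - u : ℕ) : Fin n) = P.bstart j := by
    apply fin_cancel t
    rw [fin_off (show (l - u) + t = l - 1 by omega), he]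
  have hsplitS := cArc_split_card s (l₁ := l - u) (l₂ := u) (by omega) S
  have hsplitG := cArc_split_card s (l₁ := l - u) (l₂ := u) (by omega) P.gapsUnion
  rw [show (l - u) + u = l by omega] at hsplitS hsplitG
  rw [hbase] at hsplitS hsplitG
  have hJ := main2a P hc hd hn (l - u) (by omega) (by omega) s hsgap ⟨j, hbase.symm⟩
  have hK : u + c ≤ c * (cArc n (P.bstart j) u ∩ S).card + 1 := by
    refine prefix_strong P hc hd hn j (by omega) hub ?_
    rw [show u - 1 = t from rfl, ← he]
    exact hend
  have hmulI : c * (cArc n s l ∩ S).card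
      = c * (cArc n s (l - u) ∩ S).card + c * (cArc n (P.bstart j) u ∩ S).card := by
    rw [hsplitS]; ring
  omega

end MainLemmas

/-- Let `c, d` be positive integers and `n = cd + c − 1`. Then the intervals
`[A, f_c(A)]`, as `A` ranges over the `d`-subsets of `[n]`, are pairwise disjoint. Here `F`
assigns to each `d`-subset `A` the set `f_c(A)` coming from a block structure of `A` with
density `c`. -/
theorem intervals_pairwise_disjoint (c d n : ℕ) (hc : 0 < c) (hd : 0 < d)
    (hn : n = c * d + c - 1) [NeZero n]
    (F : Finset (Fin n) → Finset (Fin n))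
    (hF : ∀ A : Finset (Fin n), A.card = d → ∃ P : BlockStructure n (c : ℝ) A, F A = P.fset)
    (A A' : Finset (Fin n)) (hA : A.card = d) (hA' : A'.card = d) (hne : A ≠ A') :
    Disjoint (fInterval A (F A)) (fInterval A' (F A')) := by
  rw [Finset.disjoint_left]
  intro C hC hC'
  rw [fInterval, Finset.mem_filter, Finset.mem_powerset] at hC hC'
  obtain ⟨hCF, hAC⟩ := hC
  obtain ⟨hCF', hAC'⟩ := hC'
  obtain ⟨P, hP⟩ := hF A hA
  obtain ⟨P', hP'⟩ := hF A' hA'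
  rw [hP] at hCF
  rw [hP'] at hCF'
  have hsub1 : A' \ A ⊆ P.gapsUnion := by
    intro x hx
    rcases Finset.mem_sdiff.mp hx with ⟨hx1, hx2⟩
    rcases Finset.mem_union.mp (hCF (hAC' hx1)) with h | h
    · exact absurd h hx2
    · exact h
  have hsub2 : A \ A' ⊆ P'.gapsUnion := by
    intro x hx
    rcases Finset.mem_sdiff.mp hx with ⟨hx1, hx2⟩
    rcases Finset.mem_union.mp (hCF' (hAC hx1)) with h | h
    · exact absurd h hx2
    · exact h
  rcases eq_or_lt_of_le (show 1 ≤ c from hc) with hc1 | hc2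
  · -- c = 1 : every d-subset is all of [n]
    rw [← hc1] at hn
    have hn' : n = d := by omega
    have hA1 : A = Finset.univ :=
      Finset.eq_univ_of_card A (by rw [hA, Fintype.card_fin, hn'])
    have hA2 : A' = Finset.univ :=
      Finset.eq_univ_of_card A' (by rw [hA', Fintype.card_fin, hn'])
    exact hne (hA1.trans hA2.symm)
  have hc2' : 2 ≤ c := hc2
  have hdA : 0 < A.card := by rw [hA]; exact hd
  have hdA' : 0 < A'.card := by rw [hA']; exact hd
  have hnA : n = c * A.card + c - 1 := by rw [hA]; exact hn
  have hnA' : n = c * A'.card + c - 1 := by rw [hA']; exact hn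
  have hAd : (A \ A').Nonempty := by
    rw [Finset.sdiff_nonempty]
    intro hsub
    exact hne (Finset.eq_of_subset_of_card_le hsub (by rw [hA, hA']))
  have hA'd : (A' \ A).Nonempty := by
    rw [Finset.sdiff_nonempty]
    intro hsub
    exact hne (Finset.eq_of_subset_of_card_le hsub (by rw [hA, hA'])).symm
  obtain ⟨a, ha⟩ := hAd
  have haA : a ∈ A := (Finset.mem_sdiff.mp ha).1
  have haA' : a ∉ A' := (Finset.mem_sdiff.mp ha).2
  set T := (Finset.range n).filter (fun t : ℕ => a + (t : Fin n) ∈ A' \ A) with hT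
  have hTne : T.Nonempty := by
    obtain ⟨x, hx⟩ := hA'd
    refine ⟨(x - a).val, Finset.mem_filter.mpr ⟨Finset.mem_range.mpr (x - a).isLt, ?_⟩⟩
    rw [Fin.cast_val_eq_self]
    have : a + (x - a) = x := by abel
    rw [this]
    exact hx
  set t₀ := T.min' hTne with ht₀def
  have ht₀ := T.min'_mem hTne
  rw [Finset.mem_filter, Finset.mem_range] at ht₀
  obtain ⟨ht₀n, ht₀mem⟩ := ht₀
  rw [← ht₀def] at ht₀n ht₀mem
  have ht₀pos : 0 < t₀ := by
    rcases Nat.eq_zero_or_pos t₀ with h0 | h0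
    · rw [h0, fin_zero_off] at ht₀mem
      exact absurd (Finset.mem_sdiff.mp ht₀mem).1 haA'
    · exact h0
  set l := t₀ + 1 with hldef
  set a' := a + (t₀ : Fin n) with ha'def
  have ha'G : a' ∈ P.gapsUnion := hsub1 ht₀mem
  have ha'A' : a' ∈ A' := (Finset.mem_sdiff.mp ht₀mem).1
  have haG' : a ∈ P'.gapsUnion := hsub2 ha
  have hend : a + ((l - 1 : ℕ) : Fin n) = a' := by
    rw [show l - 1 = t₀ from by omega]
  have h1 := main1 P hc2' hdA hnA l (by omega) (by omega) a (Or.inl (by rw [hend]; exact ha'G))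
  have h2 := main2b P' hc2' hdA' hnA' (l := l) (by omega) (by omega)
    (s := a) haG' (by rw [hend]; exact ha'A')
  have h3 : (cArc n a l ∩ P'.gapsUnion).card ≤ c - 1 := by
    calc (cArc n a l ∩ P'.gapsUnion).card ≤ P'.gapsUnion.card :=
          Finset.card_le_card Finset.inter_subset_right
      _ = c - 1 := gapsUnion_card P' hc2' hdA' hnA'
  have ha'I : a' ∈ cArc n a l := mem_cArc.mpr ⟨t₀, by omega, rfl⟩
  have haI : a ∈ cArc n a l := mem_cArc_self a (by omega)
  have h4 : 1 ≤ (cArc n a l ∩ P.gapsUnion).card :=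
    Finset.card_pos.mpr ⟨a', Finset.mem_inter.mpr ⟨ha'I, ha'G⟩⟩
  have h5 : (cArc n a l ∩ A').card ≤ (cArc n a l ∩ A ∩ A').card + 1 := by
    have hsub : cArc n a l ∩ A' ⊆ insert a' (cArc n a l ∩ A ∩ A') := by
      intro x hx
      rcases Finset.mem_inter.mp hx with ⟨hxI, hxA'⟩
      by_cases hxA : x ∈ A
      · exact Finset.mem_insert_of_mem
          (Finset.mem_inter.mpr ⟨Finset.mem_inter.mpr ⟨hxI, hxA⟩, hxA'⟩)
      · obtain ⟨t, htl, rfl⟩ := mem_cArc.mp hxI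
        have htT : t ∈ T := Finset.mem_filter.mpr ⟨Finset.mem_range.mpr (by omega),
          Finset.mem_sdiff.mpr ⟨hxA', hxA⟩⟩
        have : t₀ ≤ t := Finset.min'_le T t htT
        have : t = t₀ := by omega
        rw [this]
        exact Finset.mem_insert_self _ _
    calc (cArc n a l ∩ A').card ≤ (insert a' (cArc n a l ∩ A ∩ A')).card :=
          Finset.card_le_card hsub
      _ ≤ (cArc n a l ∩ A ∩ A').card + 1 := Finset.card_insert_le _ _
  have h6 : (cArc n a l ∩ A ∩ A').card + 1 ≤ (cArc n a l ∩ A).card := by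
    have hnotmem : a ∉ cArc n a l ∩ A ∩ A' := by
      intro hmem
      exact haA' (Finset.mem_inter.mp hmem).2
    have hins : insert a (cArc n a l ∩ A ∩ A') ⊆ cArc n a l ∩ A := by
      intro x hx
      rcases Finset.mem_insert.mp hx with rfl | hx
      · exact Finset.mem_inter.mpr ⟨haI, haA⟩
      · exact (Finset.mem_inter.mp hx).1
    calc (cArc n a l ∩ A ∩ A').card + 1
        = (insert a (cArc n a l ∩ A ∩ A')).card := (Finset.card_insert_of_notMem hnotmem).symm
      _ ≤ (cArc n a l ∩ A).card := Finset.card_le_card hins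
  have h7 : c * (cArc n a l ∩ A').card ≤ c * (cArc n a l ∩ A).card :=
    Nat.mul_le_mul_left c (le_trans h5 h6)
  omega
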